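/- Let X be a prime interval graph (an interval graph whose only modules are trivial). Then Aut(X) is isomorphic to a subgroup of Z2. -/

import Mathlib

/-- A module of a simple graph: every vertex outside `M` is adjacent to all of `M`
or to none of `M`. -/
def SimpleGraph.IsModule {V : Type*} (X : SimpleGraph V) (M : Set V) : Prop :=
  ∀ x ∉ M, (∀ m ∈ M, X.Adj x m) ∨ (∀ m ∈ M, ¬ X.Adj x m)

/-- `X` is an interval graph: the intersection graph of closed real intervals. -/
def IsIntervalGraph {V : Type*} (X : SimpleGraph V) : Prop :=
  ∃ lo hi : V → ℝ, (∀ v, lo v ≤ hi v) ∧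
    ∀ u v, X.Adj u v ↔
      u ≠ v ∧ (Set.Icc (lo u) (hi u) ∩ Set.Icc (lo v) (hi v)).Nonempty

namespace PIGAux

variable {V : Type*}

/-- complement-adjacency -/
def NA (X : SimpleGraph V) (u v : V) : Prop := u ≠ v ∧ ¬ X.Adj u v

lemma NA.symm {X : SimpleGraph V} {u v : V} (h : NA X u v) : NA X v u :=
  ⟨h.1.symm, fun h' => h.2 h'.symm⟩

/-- forcing step on ordered pairs of complement-edges -/
def st (X : SimpleGraph V) (A : V → V → Prop) (e f : V × V) : Prop :=
  f = (e.2, e.1) ∨ ∃ s, f = (e.1, s) ∧ A e.1 s ∧ ¬ NA X s e.2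

/-- Triangle contradiction: a mixed triangle (one A-edge, two B-edges at a common apex)
contradicts primality. -/
lemma tri {X : SimpleGraph V}
    (hprime : ∀ M : Set V, X.IsModule M → M = Set.univ ∨ M.Subsingleton)
    (A B : V → V → Prop)
    (hAs : ∀ u v, A u v → A v u) (hBs : ∀ u v, B u v → B v u)
    (hA : ∀ u v, A u v → NA X u v) (hB : ∀ u v, B u v → NA X u v)
    (hpart : ∀ u v, NA X u v → A u v ∨ B u v)
    (hdisj : ∀ u v, A u v → B u v → False)
    (hforce : ∀ s x y, A s x → B s y → NA X x y)
    (a b c : V) (hbc : A b c) (hab : B a b) (hac : B a c) : False := by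
  classical
  set K : V × V → Prop := Relation.ReflTransGen (st X A) (b, c) with hKdef
  have Kswap : ∀ e, K e → K (e.2, e.1) := fun e he => he.tail (Or.inl rfl)
  have inv : ∀ e, K e → A e.1 e.2 ∧ B a e.1 ∧ B a e.2 := by
    intro e he
    induction he with
    | refl => exact ⟨hbc, hab, hac⟩
    | tail hK' hst ih =>
      rename_i e' f
      rcases hst with h | ⟨s, h, hA', hnE⟩
      · subst h
        exact ⟨hAs _ _ ih.1, ih.2.2, ih.2.1⟩
      · subst h
        refine ⟨hA', ih.2.1, ?_⟩
        have hBap : B e'.1 a := hBs _ _ ih.2.1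
        have hNAsa : NA X a s := (hforce e'.1 s a hA' hBap).symm
        rcases hpart a s hNAsa with h2 | h2
        · exact absurd (hforce a s e'.2 h2 ih.2.2) hnE
        · exact h2
  set C : Set V := {x : V | ∃ y, K (x, y)} with hCdef
  have hbC : b ∈ C := ⟨c, Relation.ReflTransGen.refl⟩
  have hcC : c ∈ C := ⟨b, Kswap _ Relation.ReflTransGen.refl⟩
  have haC : a ∉ C := by
    rintro ⟨y, hy⟩
    exact (hB a a (inv _ hy).2.1).1 rfl
  have memC2 : ∀ p q : V, K (p, q) → q ∈ C := fun p q h => ⟨p, Kswap _ h⟩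
  have pe : ∀ p q : V, K (p, q) → ∀ x, x ∉ C → NA X x p → NA X x q := by
    intro p q hpq x hxC hxp
    by_contra hq
    have hApx : A p x := by
      rcases hpart p x hxp.symm with h | h
      · exact h
      · exact absurd (hforce p q x (inv _ hpq).1 h) (fun hn => hq hn.symm)
    exact hxC ⟨p, Kswap (p, x) (hpq.tail (Or.inr ⟨x, rfl, hApx, fun hn => hq hn⟩))⟩
  have const : ∀ x, x ∉ C → ∀ e, K e → ((NA X x e.1 ↔ NA X x b) ∧ (NA X x e.2 ↔ NA X x b)) := by
    intro x hx e he
    induction he with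
    | refl =>
      refine ⟨Iff.rfl, ?_, ?_⟩
      · exact fun h => pe c b (Kswap _ Relation.ReflTransGen.refl) x hx h
      · exact fun h => pe b c Relation.ReflTransGen.refl x hx h
    | tail hK' hst ih =>
      rename_i e' f
      have hKe' : K e' := hK'
      rcases hst with h | ⟨s, h, hA', hnE⟩
      · subst h; exact ⟨ih.2, ih.1⟩
      · subst h
        have hKf : K (e'.1, s) := hKe'.tail (Or.inr ⟨s, rfl, hA', hnE⟩)
        refine ⟨ih.1, ?_, ?_⟩
        · intro h
          exact ih.1.mp (pe s e'.1 (Kswap _ hKf) x hx h)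
        · intro h
          exact pe e'.1 s hKf x hx (ih.1.mpr h)
  have hmod : X.IsModule C := by
    intro x hx
    by_cases hb : NA X x b
    · right
      rintro m ⟨y, hy⟩
      exact (((const x hx _ hy).1.mpr hb)).2
    · left
      rintro m ⟨y, hy⟩
      have hnm : ¬ NA X x m := fun h => hb ((const x hx _ hy).1.mp h)
      have hne : x ≠ m := fun h => hx (h ▸ (⟨y, hy⟩ : m ∈ C))
      by_contra hadj
      exact hnm ⟨hne, hadj⟩
  rcases hprime C hmod with huniv | hss
  · exact haC (huniv ▸ Set.mem_univ a)
  · exact (hA b c hbc).1 (hss hbC hcC)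

/-- Key dichotomy: a Γ-closed 2-partition of the complement edges of a prime graph
has an empty part. -/
lemma key {X : SimpleGraph V}
    (hprime : ∀ M : Set V, X.IsModule M → M = Set.univ ∨ M.Subsingleton)
    (A B : V → V → Prop)
    (hAs : ∀ u v, A u v → A v u) (hBs : ∀ u v, B u v → B v u)
    (hA : ∀ u v, A u v → NA X u v) (hB : ∀ u v, B u v → NA X u v)
    (hpart : ∀ u v, NA X u v → A u v ∨ B u v)
    (hdisj : ∀ u v, A u v → B u v → False)
    (hforce : ∀ s x y, A s x → B s y → NA X x y) :
    (∀ u v, ¬ A u v) ∨ (∀ u v, ¬ B u v) := by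
  by_contra h
  push_neg at h
  obtain ⟨⟨u0, v0, hA0⟩, ⟨u1, v1, hB0⟩⟩ := h
  by_cases hmix : ∃ s x y, A s x ∧ B s y
  · obtain ⟨s, x, y, hsx, hsy⟩ := hmix
    have hxy : NA X x y := hforce s x y hsx hsy
    rcases hpart x y hxy with h1 | h1
    · -- seed B-edge (s,y), apex x with A-edges x-s, x-y
      have hpart' : ∀ u v, NA X u v → B u v ∨ A u v := fun u v hh => (hpart u v hh).symm
      have hdisj' : ∀ u v, B u v → A u v → False := fun u v h1 h2 => hdisj u v h2 h1
      have hforce' : ∀ s' x' y', B s' x' → A s' y' → NA X x' y' :=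
        fun s' x' y' hb ha => (hforce s' y' x' ha hb).symm
      exact tri hprime B A hBs hAs hB hA hpart' hdisj' hforce' x s y hsy (hAs s x hsx) h1
    · exact tri hprime A B hAs hBs hA hB hpart hdisj hforce y s x hsx (hBs s y hsy) (hBs x y h1)
  · set W : Set V := {s : V | ∃ x, A s x} with hWdef
    have hmod : X.IsModule W := by
      intro x hxW
      left
      rintro m ⟨x1, hmx1⟩
      have hne : x ≠ m := fun h => hxW (h ▸ (⟨x1, hmx1⟩ : m ∈ W))
      by_contra hadj
      rcases hpart x m ⟨hne, hadj⟩ with h | h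
      · exact hxW ⟨m, h⟩
      · exact hmix ⟨m, x1, x, hmx1, hBs x m h⟩
    rcases hprime W hmod with huniv | hss
    · have : u1 ∈ W := huniv ▸ Set.mem_univ u1
      obtain ⟨x1, hux⟩ := this
      exact hmix ⟨u1, x1, v1, hux, hB0⟩
    · exact (hA u0 v0 hA0).1 (hss ⟨v0, hA0⟩ ⟨u0, hAs _ _ hA0⟩)

end PIGAux

open PIGAux

/-- The automorphism group of a prime interval graph embeds into `Z₂`. -/
theorem prime_interval_graph_aut_le_z2 {V : Type*} [Fintype V] (X : SimpleGraph V)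
    (hint : IsIntervalGraph X)
    (hprime : ∀ M : Set V, X.IsModule M → M = Set.univ ∨ M.Subsingleton) :
    ∃ f : (X ≃g X) →* Multiplicative (ZMod 2), Function.Injective f := by
  classical
  by_cases hcard : Fintype.card V ≤ 2
  · -- small case : at most two vertices
    have two_elt : ∀ a b c : V, a ≠ b → c = a ∨ c = b := by
      intro a b c hab
      by_contra h
      push_neg at h
      have h3 : ({a, b, c} : Finset V).card = 3 := by
        rw [Finset.card_insert_of_notMem (by simp [hab, h.1.symm]),
            Finset.card_insert_of_notMem (by simp [h.2.symm]), Finset.card_singleton]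
      have := Finset.card_le_univ ({a, b, c} : Finset V)
      rw [h3] at this
      omega
    have swap_lemma : ∀ σ : X ≃g X, (¬ ∀ v, σ v = v) → ∀ v, σ v ≠ v ∧ σ (σ v) = v := by
      intro σ hσ v
      push_neg at hσ
      obtain ⟨u, hu⟩ := hσ
      set w := σ u with hw
      have hwu : w ≠ u := hu
      have hσw : σ w ≠ w := fun h => hwu (σ.injective (h.trans hw))
      have hσw' : σ w = u := by
        rcases two_elt u w (σ w) (Ne.symm hwu) with h | h
        · exact h
        · exact absurd h hσw
      rcases two_elt u w v (Ne.symm hwu) with rfl | rfl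
      · refine ⟨hu, ?_⟩
        rw [← hw, hσw']
      · refine ⟨hσw, ?_⟩
        rw [hσw', hw]
    refine ⟨{ toFun := fun σ => if ∀ v, σ v = v then 1 else Multiplicative.ofAdd 1,
              map_one' := if_pos (fun v => rfl),
              map_mul' := ?_ }, ?_⟩
    · intro σ τ
      by_cases hσ : ∀ v, σ v = v <;> by_cases hτ : ∀ v, τ v = v
      · have h1 : ∀ v, (σ * τ) v = v := fun v => by
          show σ (τ v) = v
          rw [hτ, hσ]
        rw [if_pos h1, if_pos hσ, if_pos hτ, one_mul]
      · have h1 : ¬ ∀ v, (σ * τ) v = v := by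
          intro h
          apply hτ
          intro v
          have := h v
          have h2 : σ (τ v) = v := this
          have h3 : σ (τ v) = v → τ v = v := by
            intro hh
            have := congrArg σ.symm hh
            simp at this
            -- σ.symm v = τ v and σ v = v so σ.symm v = v
            have h4 : σ.symm v = v := by
              have := congrArg σ.symm (hσ v)
              simpa using this.symm
            rw [h4] at this
            exact this
          exact h3 h2
        rw [if_neg h1, if_pos hσ, if_neg hτ, one_mul]
      · have h1 : ¬ ∀ v, (σ * τ) v = v := by
          intro h
          apply hσ
          intro v
          have h2 : σ (τ v) = v := h v
          rw [hτ v] at h2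
          exact h2
        rw [if_neg h1, if_neg hσ, if_pos hτ, mul_one]
      · have h1 : ∀ v, (σ * τ) v = v := by
          intro v
          have hs := swap_lemma σ hσ
          have ht := swap_lemma τ hτ
          show σ (τ v) = v
          -- τ v = σ v ? both are "the other" element
          have h2 : τ v = σ v := by
            rcases two_elt v (σ v) (τ v) (Ne.symm (hs v).1) with h' | h'
            · exact absurd h' (ht v).1
            · exact h' 
          rw [h2, (hs v).2]
        rw [if_pos h1, if_neg hσ, if_neg hτ]
        decide
    · intro σ τ h
      simp only [MonoidHom.coe_mk, OneHom.coe_mk] at h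
      change (if ∀ v, σ v = v then (1 : Multiplicative (ZMod 2)) else Multiplicative.ofAdd 1) =
        (if ∀ v, τ v = v then (1 : Multiplicative (ZMod 2)) else Multiplicative.ofAdd 1) at h
      by_cases hσ : ∀ v, σ v = v <;> by_cases hτ : ∀ v, τ v = v
      · ext v
        rw [hσ v, hτ v]
      · rw [if_pos hσ, if_neg hτ] at h
        exact absurd h (by decide)
      · rw [if_neg hσ, if_pos hτ] at h
        exact absurd h (by decide)
      · ext v
        have hs := swap_lemma σ hσ
        have ht := swap_lemma τ hτ
        have h2 : τ v = σ v := by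
          rcases two_elt v (σ v) (τ v) (Ne.symm (hs v).1) with h' | h'
          · exact absurd h' (ht v).1
          · exact h'
        rw [h2]
  · push_neg at hcard
    obtain ⟨lo, hi, hlh, hadj⟩ := hint
    set L : V → V → Prop := fun u v => hi u < lo v with hL
    have lNA : ∀ u v, L u v → NA X u v := by
      intro u v h
      simp only [hL] at h
      have hne : u ≠ v := by
        rintro rfl
        exact absurd h (not_lt.2 (hlh u))
      refine ⟨hne, fun hadj' => ?_⟩
      obtain ⟨-, t, ht⟩ := (hadj u v).1 hadj'
      simp only [Set.mem_inter_iff, Set.mem_Icc] at ht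
      exact lt_irrefl t (lt_of_le_of_lt ht.1.2 (lt_of_lt_of_le h ht.2.1))
    have NAl : ∀ u v, NA X u v → L u v ∨ L v u := by
      intro u v hn
      by_contra hcon
      push_neg at hcon
      apply hn.2
      refine (hadj u v).2 ⟨hn.1, ⟨max (lo u) (lo v), ?_⟩⟩
      simp only [Set.mem_inter_iff, Set.mem_Icc]
      have h1 : lo v ≤ hi u := by
        have := hcon.1; simp only [hL] at this; exact not_lt.1 this
      have h2 : lo u ≤ hi v := by
        have := hcon.2; simp only [hL] at this; exact not_lt.1 this
      exact ⟨⟨le_max_left _ _, max_le (hlh u) h1⟩, ⟨le_max_right _ _, max_le h2 (hlh v)⟩⟩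
    have ltr : ∀ u v w, L u v → L v w → L u w := by
      intro u v w h1 h2
      simp only [hL] at h1 h2 ⊢
      exact lt_trans (lt_of_lt_of_le h1 (hlh v)) h2
    have lasym : ∀ u v, L u v → L v u → False := by
      intro u v h1 h2
      simp only [hL] at h1 h2
      exact lt_irrefl (hi u) (lt_trans (lt_of_lt_of_le h1 (hlh v)) (lt_of_lt_of_le h2 (hlh u)))
    have hNAiso : ∀ (σ : X ≃g X) (u v : V), NA X u v → NA X (σ u) (σ v) :=
      fun σ u v h => ⟨fun hh => h.1 (σ.injective hh), fun hh => h.2 (σ.map_adj_iff.1 hh)⟩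
    have hNAiso' : ∀ (σ : X ≃g X) (u v : V), NA X (σ u) (σ v) → NA X u v :=
      fun σ u v h => ⟨fun hh => h.1 (congrArg σ hh), fun hh => h.2 (σ.map_adj_iff.2 hh)⟩
    have hex3 : ∀ a b : V, a ≠ b → ∃ c, c ≠ a ∧ c ≠ b := by
      intro a b hab
      by_contra h
      push_neg at h
      have hsub : (Finset.univ : Finset V) ⊆ {a, b} := by
        intro c _
        simp only [Finset.mem_insert, Finset.mem_singleton]
        by_cases hca : c = a
        · exact Or.inl hca
        · exact Or.inr (h c hca)
      have h1 := Finset.card_le_card hsub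
      have h2 : ({a, b} : Finset V).card ≤ 2 := by
        refine le_trans (Finset.card_insert_le a {b}) ?_
        simp
      rw [Finset.card_univ] at h1
      omega
    have hLne : ∃ u v, L u v := by
      by_contra hno
      push_neg at hno
      obtain ⟨a, b, hab⟩ := Fintype.exists_pair_of_one_lt_card (α := V) (by omega)
      obtain ⟨c, hca, hcb⟩ := hex3 a b hab
      have hmod : X.IsModule {a, b} := by
        intro x hx
        simp only [Set.mem_insert_iff, Set.mem_singleton_iff] at hx
        push_neg at hx
        left
        intro m hm
        simp only [Set.mem_insert_iff, Set.mem_singleton_iff] at hm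
        have hne : x ≠ m := by
          rcases hm with rfl | rfl
          exacts [hx.1, hx.2]
        by_contra hadj'
        rcases NAl x m ⟨hne, hadj'⟩ with h | h
        · exact hno x m h
        · exact hno m x h
      rcases hprime _ hmod with h | h
      · have hc : c ∈ ({a, b} : Set V) := h ▸ Set.mem_univ c
        simp only [Set.mem_insert_iff, Set.mem_singleton_iff] at hc
        rcases hc with rfl | rfl
        · exact hca rfl
        · exact hcb rfl
      · exact hab (h (Set.mem_insert _ _) (Set.mem_insert_iff.mpr (Or.inr rfl)))
    set Pres : (X ≃g X) → Prop := fun σ => ∀ u v, L u v → L (σ u) (σ v) with hPresDef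
    set Rev : (X ≃g X) → Prop := fun σ => ∀ u v, L u v → L (σ v) (σ u) with hRevDef
    have dich : ∀ σ : X ≃g X, Pres σ ∨ Rev σ := by
      intro σ
      simp only [hPresDef, hRevDef]
      set A : V → V → Prop := fun u v => (L u v ∧ L (σ u) (σ v)) ∨ (L v u ∧ L (σ v) (σ u)) with hA
      set B : V → V → Prop := fun u v => (L u v ∧ L (σ v) (σ u)) ∨ (L v u ∧ L (σ u) (σ v)) with hB
      have hAs : ∀ u v, A u v → A v u := by
        intro u v h; simp only [hA] at h ⊢; tauto
      have hBs : ∀ u v, B u v → B v u := by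
        intro u v h; simp only [hB] at h ⊢; tauto
      have hAsub : ∀ u v, A u v → NA X u v := by
        intro u v h
        rcases h with ⟨h1, -⟩ | ⟨h1, -⟩
        · exact lNA u v h1
        · exact (lNA v u h1).symm
      have hBsub : ∀ u v, B u v → NA X u v := by
        intro u v h
        rcases h with ⟨h1, -⟩ | ⟨h1, -⟩
        · exact lNA u v h1
        · exact (lNA v u h1).symm
      have hpart : ∀ u v, NA X u v → A u v ∨ B u v := by
        intro u v hn
        have hn' := hNAiso σ u v hn
        rcases NAl u v hn with h1 | h1 <;> rcases NAl _ _ hn' with h2 | h2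
        · exact Or.inl (Or.inl ⟨h1, h2⟩)
        · exact Or.inr (Or.inl ⟨h1, h2⟩)
        · exact Or.inr (Or.inr ⟨h1, h2⟩)
        · exact Or.inl (Or.inr ⟨h1, h2⟩)
      have hdisj : ∀ u v, A u v → B u v → False := by
        intro u v h1 h2
        rcases h1 with ⟨ha, hb⟩ | ⟨ha, hb⟩ <;> rcases h2 with ⟨hc, hd⟩ | ⟨hc, hd⟩
        · exact lasym _ _ hb hd
        · exact lasym _ _ ha hc
        · exact lasym _ _ ha hc
        · exact lasym _ _ hb hd
      have hforce : ∀ s x y, A s x → B s y → NA X x y := by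
        intro s x y h1 h2
        rcases h1 with ⟨ha, hb⟩ | ⟨ha, hb⟩ <;> rcases h2 with ⟨hc, hd⟩ | ⟨hc, hd⟩
        · exact hNAiso' σ _ _ ((lNA _ _ (ltr _ _ _ hd hb)).symm)
        · exact (lNA _ _ (ltr _ _ _ hc ha)).symm
        · exact lNA _ _ (ltr _ _ _ ha hc)
        · exact hNAiso' σ _ _ (lNA _ _ (ltr _ _ _ hb hd))
      rcases PIGAux.key hprime A B hAs hBs hAsub hBsub hpart hdisj hforce with hAe | hBe
      · right
        intro u v huv
        rcases NAl _ _ (hNAiso σ u v (lNA u v huv)) with h | h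
        · exact absurd (Or.inl ⟨huv, h⟩ : A u v) (hAe u v)
        · exact h
      · left
        intro u v huv
        rcases NAl _ _ (hNAiso σ u v (lNA u v huv)) with h | h
        · exact h
        · exact absurd (Or.inl ⟨huv, h⟩ : B u v) (hBe u v)
    obtain ⟨u₀, v₀, hLuv₀⟩ := hLne
    have presENE : ∀ σ : X ≃g X, Pres σ → Rev σ → False := by
      intro σ h1 h2
      simp only [hPresDef, hRevDef] at h1 h2
      exact lasym _ _ (h1 u₀ v₀ hLuv₀) (h2 u₀ v₀ hLuv₀)
    have pres_one : Pres 1 := by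
      simp only [hPresDef]
      intro u v h
      exact h
    have pp : ∀ σ τ : X ≃g X, Pres σ → Pres τ → Pres (σ * τ) := by
      intro σ τ h1 h2
      simp only [hPresDef] at h1 h2 ⊢
      intro u v h
      exact h1 _ _ (h2 _ _ h)
    have pr : ∀ σ τ : X ≃g X, Pres σ → Rev τ → Rev (σ * τ) := by
      intro σ τ h1 h2
      simp only [hPresDef, hRevDef] at h1 h2 ⊢
      intro u v h
      exact h1 _ _ (h2 _ _ h)
    have rp : ∀ σ τ : X ≃g X, Rev σ → Pres τ → Rev (σ * τ) := by
      intro σ τ h1 h2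
      simp only [hPresDef, hRevDef] at h1 h2 ⊢
      intro u v h
      exact h1 _ _ (h2 _ _ h)
    have rr : ∀ σ τ : X ≃g X, Rev σ → Rev τ → Pres (σ * τ) := by
      intro σ τ h1 h2
      simp only [hPresDef, hRevDef] at h1 h2 ⊢
      intro u v h
      exact h1 _ _ (h2 _ _ h)
    have kernel : ∀ σ : X ≃g X, Pres σ → σ = 1 := by
      intro σ hp
      simp only [hPresDef] at hp
      have hiff : ∀ u v, L (σ u) (σ v) ↔ L u v := by
        intro u v
        constructor
        · intro h
          rcases NAl u v (hNAiso' σ u v (lNA _ _ h)) with h' | h'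
          · exact h'
          · exact absurd (hp v u h') (fun hh => lasym _ _ h hh)
        · exact hp u v
      have main : ∀ v, σ v = v := by
        intro v
        by_contra hne'
        set D : V → Finset V := fun w => Finset.univ.filter (fun x => L x w) with hD
        set U : V → Finset V := fun w => Finset.univ.filter (fun x => L w x) with hU
        have hDimg : ∀ w, D (σ w) = (D w).image σ := by
          intro w
          ext y
          simp only [hD, Finset.mem_filter, Finset.mem_univ, true_and, Finset.mem_image]
          constructor
          · intro h
            have h2 : L (σ (σ.symm y)) (σ w) := by
              rw [σ.apply_symm_apply]
              exact h
            exact ⟨σ.symm y, (hiff _ _).mp h2, σ.apply_symm_apply y⟩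
          · rintro ⟨x, hx, rfl⟩
            exact (hiff x w).mpr hx
        have hUimg : ∀ w, U (σ w) = (U w).image σ := by
          intro w
          ext y
          simp only [hU, Finset.mem_filter, Finset.mem_univ, true_and, Finset.mem_image]
          constructor
          · intro h
            have h2 : L (σ w) (σ (σ.symm y)) := by
              rw [σ.apply_symm_apply]
              exact h
            exact ⟨σ.symm y, (hiff _ _).mp h2, σ.apply_symm_apply y⟩
          · rintro ⟨x, hx, rfl⟩
            exact (hiff w x).mpr hx
        have hDeq : D (σ v) = D v := by
          have hcd : (D (σ v)).card = (D v).card := by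
            rw [hDimg v]
            exact Finset.card_image_of_injective _ σ.injective
          rcases le_total (lo v) (lo (σ v)) with h | h
          · refine (Finset.eq_of_subset_of_card_le ?_ (le_of_eq hcd)).symm
            intro x hx
            simp only [hD, Finset.mem_filter, Finset.mem_univ, true_and, hL] at hx ⊢
            exact lt_of_lt_of_le hx h
          · refine Finset.eq_of_subset_of_card_le ?_ (le_of_eq hcd.symm)
            intro x hx
            simp only [hD, Finset.mem_filter, Finset.mem_univ, true_and, hL] at hx ⊢
            exact lt_of_lt_of_le hx h
        have hUeq : U (σ v) = U v := by
          have hcd : (U (σ v)).card = (U v).card := by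
            rw [hUimg v]
            exact Finset.card_image_of_injective _ σ.injective
          rcases le_total (hi v) (hi (σ v)) with h | h
          · refine Finset.eq_of_subset_of_card_le ?_ (le_of_eq hcd.symm)
            intro x hx
            simp only [hU, Finset.mem_filter, Finset.mem_univ, true_and, hL] at hx ⊢
            exact lt_of_le_of_lt h hx
          · refine (Finset.eq_of_subset_of_card_le ?_ (le_of_eq hcd)).symm
            intro x hx
            simp only [hU, Finset.mem_filter, Finset.mem_univ, true_and, hL] at hx ⊢
            exact lt_of_le_of_lt h hx
        have hLD : ∀ x, L x (σ v) ↔ L x v := by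
          intro x
          have := Finset.ext_iff.mp hDeq x
          simpa only [hD, Finset.mem_filter, Finset.mem_univ, true_and] using this
        have hLU : ∀ x, L (σ v) x ↔ L v x := by
          intro x
          have := Finset.ext_iff.mp hUeq x
          simpa only [hU, Finset.mem_filter, Finset.mem_univ, true_and] using this
        have hmodM : X.IsModule {v, σ v} := by
          intro x hx
          simp only [Set.mem_insert_iff, Set.mem_singleton_iff] at hx
          push_neg at hx
          have hadjiff : X.Adj x v ↔ X.Adj x (σ v) := by
            constructor
            · intro h
              by_contra h2
              rcases NAl x (σ v) ⟨hx.2, h2⟩ with h3 | h3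
              · exact (lNA x v ((hLD x).mp h3)).2 h
              · exact (lNA v x ((hLU x).mp h3)).2 h.symm
            · intro h
              by_contra h2
              rcases NAl x v ⟨hx.1, h2⟩ with h3 | h3
              · exact (lNA x (σ v) ((hLD x).mpr h3)).2 h
              · exact (lNA (σ v) x ((hLU x).mpr h3)).2 h.symm
          by_cases hA' : X.Adj x v
          · left
            intro m hm
            simp only [Set.mem_insert_iff, Set.mem_singleton_iff] at hm
            rcases hm with rfl | rfl
            · exact hA'
            · exact hadjiff.mp hA'
          · right
            intro m hm
            simp only [Set.mem_insert_iff, Set.mem_singleton_iff] at hm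
            rcases hm with rfl | rfl
            · exact hA'
            · exact fun hh => hA' (hadjiff.mpr hh)
        rcases hprime _ hmodM with h | h
        · obtain ⟨z, hz1, hz2⟩ := hex3 v (σ v) (fun hh => hne' hh.symm)
          have hz : z ∈ ({v, σ v} : Set V) := h ▸ Set.mem_univ z
          simp only [Set.mem_insert_iff, Set.mem_singleton_iff] at hz
          rcases hz with rfl | rfl
          · exact hz1 rfl
          · exact hz2 rfl
        · exact hne' (h (Set.mem_insert_iff.mpr (Or.inr rfl)) (Set.mem_insert _ _))
      ext v
      exact main v
    refine ⟨{ toFun := fun σ => if Pres σ then 1 else Multiplicative.ofAdd 1,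
              map_one' := if_pos pres_one,
              map_mul' := ?_ }, ?_⟩
    · intro σ τ
      rcases dich σ with hσ | hσ <;> rcases dich τ with hτ | hτ
      · rw [if_pos (pp σ τ hσ hτ), if_pos hσ, if_pos hτ, one_mul]
      · rw [if_neg (fun h => presENE _ h (pr σ τ hσ hτ)), if_pos hσ,
          if_neg (fun h => presENE _ h hτ), one_mul]
      · rw [if_neg (fun h => presENE _ h (rp σ τ hσ hτ)),
          if_neg (fun h => presENE _ h hσ), if_pos hτ, mul_one]
      · rw [if_pos (rr σ τ hσ hτ), if_neg (fun h => presENE _ h hσ),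
          if_neg (fun h => presENE _ h hτ)]
        decide
    · rw [injective_iff_map_eq_one]
      intro σ h
      simp only [MonoidHom.coe_mk, OneHom.coe_mk] at h
      by_cases hp : Pres σ
      · exact kernel σ hp
      · rw [if_neg hp] at h
        exact absurd h (by decide)
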